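/- Let E be a nontrivial complex Hilbert space, let H be a bounded selfadjoint invertible operator on E and set g = ‖H⁻¹‖⁻¹. Let ρ > 0 and let X be a bounded operator on E with X*X ≥ ρ²·1 and XX* ≥ ρ²·1. Suppose κ > 0 satisfies κ·‖HX − XH‖ ≤ g³/(12‖H‖) and κρ > 2g. Then the block operator L = [[−H, κX*], [κX, H]] on E ⊕ E satisfies L² ≥ (κ²ρ²/2)·1; in particular L is invertible. -/

import Mathlib

open ContinuousLinearMap in
/-- The block operator `[[A, B], [C, D]]` on the Hilbert space direct sum `E ⊕ F`
(realized as `WithLp 2 (E × F)`), acting by `(x, y) ↦ (A x + B y, C x + D y)`. -/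
noncomputable def blockOp {E F : Type*} [NormedAddCommGroup E] [InnerProductSpace ℂ E]
    [NormedAddCommGroup F] [InnerProductSpace ℂ F]
    (A : E →L[ℂ] E) (B : F →L[ℂ] E) (C : E →L[ℂ] F) (D : F →L[ℂ] F) :
    WithLp 2 (E × F) →L[ℂ] WithLp 2 (E × F) :=
  ((WithLp.prodContinuousLinearEquiv 2 ℂ E F).symm.toContinuousLinearMap.comp
    ((A.comp (fst ℂ E F) + B.comp (snd ℂ E F)).prod
      (C.comp (fst ℂ E F) + D.comp (snd ℂ E F)))).comp
    (WithLp.prodContinuousLinearEquiv 2 ℂ E F).toContinuousLinearMap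



set_option maxHeartbeats 1000000

section aux
open scoped InnerProductSpace
variable {E F : Type*} [NormedAddCommGroup E] [InnerProductSpace ℂ E]
    [NormedAddCommGroup F] [InnerProductSpace ℂ F]

lemma blockOp_fst (A : E →L[ℂ] E) (B : F →L[ℂ] E) (C : E →L[ℂ] F) (D : F →L[ℂ] F)
    (v : WithLp 2 (E × F)) : (blockOp A B C D v).fst = A v.fst + B v.snd := rfl

lemma blockOp_snd (A : E →L[ℂ] E) (B : F →L[ℂ] E) (C : E →L[ℂ] F) (D : F →L[ℂ] F)
    (v : WithLp 2 (E × F)) : (blockOp A B C D v).snd = C v.fst + D v.snd := rfl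

lemma cinner_self_re (x : E) : (⟪x, x⟫_ℂ).re = ‖x‖ ^ 2 := by
  rw [← RCLike.re_to_complex]; exact inner_self_eq_norm_sq x

lemma blockOp_isSelfAdjoint [CompleteSpace E] (H X : E →L[ℂ] E) (hH : IsSelfAdjoint H)
    (κ : ℝ) :
    IsSelfAdjoint (blockOp (-H) ((κ : ℂ) • ContinuousLinearMap.adjoint X) ((κ : ℂ) • X) H) := by
  have hHs := (ContinuousLinearMap.isSelfAdjoint_iff_isSymmetric.mp hH)
  rw [ContinuousLinearMap.isSelfAdjoint_iff_isSymmetric]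
  intro v w
  simp only [ContinuousLinearMap.coe_coe, WithLp.prod_inner_apply, blockOp_fst, blockOp_snd,
    inner_add_left, inner_add_right, ContinuousLinearMap.neg_apply, inner_neg_left,
    inner_neg_right, ContinuousLinearMap.smul_apply, inner_smul_left, inner_smul_right,
    Complex.star_def, Complex.conj_ofReal, ContinuousLinearMap.adjoint_inner_left,
    ContinuousLinearMap.adjoint_inner_right]
  have h1 : ∀ a b : E, ⟪H a, b⟫_ℂ = ⟪a, H b⟫_ℂ := fun a b => hHs a b
  have e1 : ∀ u : WithLp 2 (E × E), (blockOp (-H) ((κ : ℂ) • ContinuousLinearMap.adjoint X)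
      ((κ : ℂ) • X) H u).ofLp.1 = (-H) u.ofLp.1 + ((κ : ℂ) • ContinuousLinearMap.adjoint X) u.ofLp.2 :=
    fun _ => rfl
  have e2 : ∀ u : WithLp 2 (E × E), (blockOp (-H) ((κ : ℂ) • ContinuousLinearMap.adjoint X)
      ((κ : ℂ) • X) H u).ofLp.2 = ((κ : ℂ) • X) u.ofLp.1 + H u.ofLp.2 :=
    fun _ => rfl
  simp only [e1, e2, inner_add_left, inner_add_right, ContinuousLinearMap.neg_apply, inner_neg_left,
    inner_neg_right, ContinuousLinearMap.smul_apply, inner_smul_left, inner_smul_right,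
    Complex.star_def, Complex.conj_ofReal, ContinuousLinearMap.adjoint_inner_left,
    ContinuousLinearMap.adjoint_inner_right]
  rw [h1 v.ofLp.1 w.ofLp.1, h1 v.ofLp.2 w.ofLp.2]
  ring
end aux


open scoped InnerProductSpace

/-- Quantitative gap estimate for the localizer on the exterior region: if `H` is selfadjoint
and invertible with `g = ‖H⁻¹‖⁻¹`, `X*X ≥ ρ²·1`, `XX* ≥ ρ²·1`, `κ‖HX − XH‖ ≤ g³/(12‖H‖)`
and `κρ > 2g`, then `L = [[−H, κX*], [κX, H]]` satisfies `L² ≥ (κ²ρ²/2)·1`, so `L` is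
invertible. -/
theorem localizer_exterior_gap {E : Type*} [NormedAddCommGroup E] [InnerProductSpace ℂ E]
    [CompleteSpace E] [Nontrivial E] (H X : E →L[ℂ] E) (hH : IsSelfAdjoint H)
    (hHinv : IsUnit H) (ρ : ℝ) (hρ : 0 < ρ)
    (hX1 : ((ρ ^ 2 : ℝ) : ℂ) • (1 : E →L[ℂ] E) ≤ ContinuousLinearMap.adjoint X * X)
    (hX2 : ((ρ ^ 2 : ℝ) : ℂ) • (1 : E →L[ℂ] E) ≤ X * ContinuousLinearMap.adjoint X)
    (κ : ℝ) (hκ : 0 < κ)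
    (hκ1 : κ * ‖H * X - X * H‖ ≤ (‖Ring.inverse H‖⁻¹) ^ 3 / (12 * ‖H‖))
    (hκ2 : κ * ρ > 2 * ‖Ring.inverse H‖⁻¹) :
    ((κ ^ 2 * ρ ^ 2 / 2 : ℝ) : ℂ) • (1 : WithLp 2 (E × E) →L[ℂ] WithLp 2 (E × E)) ≤
      (blockOp (-H) ((κ : ℂ) • ContinuousLinearMap.adjoint X) ((κ : ℂ) • X) H) ^ 2 ∧
    IsUnit (blockOp (-H) ((κ : ℂ) • ContinuousLinearMap.adjoint X) ((κ : ℂ) • X) H) := by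
  set L := blockOp (-H) ((κ : ℂ) • ContinuousLinearMap.adjoint X) ((κ : ℂ) • X) H with hLdef
  set g := ‖Ring.inverse H‖⁻¹ with hgdef
  set k := ‖H * X - X * H‖ with hkdef
  set c := κ ^ 2 * ρ ^ 2 / 2 with hcdef
  have hc : 0 < c := by positivity
  -- scalar estimates
  have hone : ‖(1 : E →L[ℂ] E)‖ = 1 := norm_one
  have hinvH : Ring.inverse H * H = 1 := Ring.inverse_mul_cancel _ hHinv
  have h1le : 1 ≤ ‖Ring.inverse H‖ * ‖H‖ := by
    calc (1 : ℝ) = ‖(1 : E →L[ℂ] E)‖ := hone.symm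
    _ = ‖Ring.inverse H * H‖ := by rw [hinvH]
    _ ≤ ‖Ring.inverse H‖ * ‖H‖ := norm_mul_le _ _
  have hHpos : 0 < ‖H‖ := by
    by_contra h
    push_neg at h
    have : ‖H‖ = 0 := le_antisymm h (norm_nonneg _)
    rw [this, mul_zero] at h1le; linarith
  have hinvpos : 0 < ‖Ring.inverse H‖ := by
    by_contra h
    push_neg at h
    have : ‖Ring.inverse H‖ = 0 := le_antisymm h (norm_nonneg _)
    rw [this, zero_mul] at h1le; linarith
  have hgpos : 0 < g := by rw [hgdef]; positivity
  have hgH : g ≤ ‖H‖ := by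
    rw [hgdef, inv_le_iff_one_le_mul₀' hinvpos]
    exact h1le
  have hknn : 0 ≤ k := norm_nonneg _
  have hck : κ * k ≤ c / 2 := by
    have h1 : κ * k ≤ g ^ 3 / (12 * ‖H‖) := hκ1
    have h2 : 2 * g < κ * ρ := hκ2
    have h3 : g ^ 3 / (12 * ‖H‖) ≤ g ^ 2 / 12 := by
      rw [div_le_div_iff₀ (by positivity) (by norm_num)]
      have h3a : 12 * g ^ 2 * g ≤ 12 * g ^ 2 * ‖H‖ :=
        mul_le_mul_of_nonneg_left hgH (by positivity)
      calc g ^ 3 * 12 = 12 * g ^ 2 * g := by ring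
      _ ≤ 12 * g ^ 2 * ‖H‖ := h3a
      _ = g ^ 2 * (12 * ‖H‖) := by ring
    have h4 : g ^ 2 ≤ (κ * ρ / 2) ^ 2 := by
      apply pow_le_pow_left₀ hgpos.le
      linarith only [h2]
    have h5 : c / 2 = (κ * ρ / 2) ^ 2 := by rw [hcdef]; ring
    have h6 : 0 ≤ g ^ 2 := sq_nonneg g
    have h7 : 0 ≤ (κ * ρ / 2) ^ 2 := sq_nonneg _
    linarith only [h1, h3, h4, h5, h6, h7]
  -- pointwise bounds from hX1, hX2
  have hXx : ∀ x : E, ρ ^ 2 * ‖x‖ ^ 2 ≤ ‖X x‖ ^ 2 := by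
    intro x
    have := ((ContinuousLinearMap.le_def _ _).mp hX1).inner_nonneg_left x
    simp only [ContinuousLinearMap.sub_apply, ContinuousLinearMap.mul_apply,
      ContinuousLinearMap.smul_apply, ContinuousLinearMap.one_apply, inner_sub_left,
      inner_smul_left, Complex.star_def, Complex.conj_ofReal,
      ContinuousLinearMap.adjoint_inner_left, map_sub, RCLike.re_to_complex] at this
    have := (Complex.le_def.mp this).1
    rw [Complex.zero_re, Complex.sub_re, Complex.re_ofReal_mul, cinner_self_re x, cinner_self_re (X x)] at this
    linarith
  have hXy : ∀ y : E, ρ ^ 2 * ‖y‖ ^ 2 ≤ ‖ContinuousLinearMap.adjoint X y‖ ^ 2 := by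
    intro y
    have := ((ContinuousLinearMap.le_def _ _).mp hX2).inner_nonneg_left y
    simp only [ContinuousLinearMap.sub_apply, ContinuousLinearMap.mul_apply,
      ContinuousLinearMap.smul_apply, ContinuousLinearMap.one_apply, inner_sub_left,
      inner_smul_left, Complex.star_def, Complex.conj_ofReal,
      ContinuousLinearMap.adjoint_inner_right, map_sub, RCLike.re_to_complex] at this
    have e : ⟪X (ContinuousLinearMap.adjoint X y), y⟫_ℂ
        = ⟪ContinuousLinearMap.adjoint X y, ContinuousLinearMap.adjoint X y⟫_ℂ :=
      (ContinuousLinearMap.adjoint_inner_right X _ _).symm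
    have := (Complex.le_def.mp this).1
    rw [Complex.zero_re, Complex.sub_re, Complex.re_ofReal_mul, cinner_self_re y, e,
      cinner_self_re (ContinuousLinearMap.adjoint X y)] at this
    linarith
  have hHs : ∀ a b : E, ⟪H a, b⟫_ℂ = ⟪a, H b⟫_ℂ :=
    fun a b => (ContinuousLinearMap.isSelfAdjoint_iff_isSymmetric.mp hH) a b
  -- the key norm bound
  have hnorm : ∀ v : WithLp 2 (E × E), c * ‖v‖ ^ 2 ≤ ‖L v‖ ^ 2 := by
    intro v
    set x := v.fst
    set y := v.snd
    have hv2 : ‖v‖ ^ 2 = ‖x‖ ^ 2 + ‖y‖ ^ 2 := WithLp.prod_norm_sq_eq_of_L2 v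
    have hLv2 : ‖L v‖ ^ 2 = ‖(-H) x + ((κ : ℂ) • ContinuousLinearMap.adjoint X) y‖ ^ 2 +
        ‖((κ : ℂ) • X) x + H y‖ ^ 2 := by
      rw [WithLp.prod_norm_sq_eq_of_L2, blockOp_fst, blockOp_snd]
    rw [hLv2, norm_add_sq (𝕜 := ℂ), norm_add_sq (𝕜 := ℂ)]
    -- cross terms
    have hcross1 : ⟪(-H) x, ((κ : ℂ) • ContinuousLinearMap.adjoint X) y⟫_ℂ
        = -((κ : ℂ) * ⟪X (H x), y⟫_ℂ) := by
      simp only [ContinuousLinearMap.neg_apply, ContinuousLinearMap.smul_apply,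
        inner_neg_left, inner_smul_right, ContinuousLinearMap.adjoint_inner_right,
        map_neg, neg_mul, mul_neg]
    have hcross2 : ⟪((κ : ℂ) • X) x, H y⟫_ℂ = (κ : ℂ) * ⟪H (X x), y⟫_ℂ := by
      simp only [ContinuousLinearMap.smul_apply, inner_smul_left, Complex.star_def,
        Complex.conj_ofReal]
      rw [hHs (X x) y]
    have hKbound : -(k * ‖x‖ * ‖y‖) ≤ (⟪H (X x), y⟫_ℂ - ⟪X (H x), y⟫_ℂ).re := by
      have heq : ⟪H (X x), y⟫_ℂ - ⟪X (H x), y⟫_ℂ = ⟪(H * X - X * H) x, y⟫_ℂ := by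
        simp [ContinuousLinearMap.sub_apply, ContinuousLinearMap.mul_apply, inner_sub_left]
      rw [heq]
      have h1 : ‖⟪(H * X - X * H) x, y⟫_ℂ‖ ≤ k * ‖x‖ * ‖y‖ := by
        calc ‖⟪(H * X - X * H) x, y⟫_ℂ‖ ≤ ‖(H * X - X * H) x‖ * ‖y‖ := norm_inner_le_norm _ _
        _ ≤ k * ‖x‖ * ‖y‖ :=
            mul_le_mul_of_nonneg_right ((H * X - X * H).le_opNorm x) (norm_nonneg y)
      have h2 : |(⟪(H * X - X * H) x, y⟫_ℂ).re| ≤ ‖⟪(H * X - X * H) x, y⟫_ℂ‖ :=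
        Complex.abs_re_le_norm _
      have := neg_abs_le ((⟪(H * X - X * H) x, y⟫_ℂ).re)
      linarith
    have hnsm1 : ‖((κ : ℂ) • ContinuousLinearMap.adjoint X) y‖ ^ 2 =
        κ ^ 2 * ‖ContinuousLinearMap.adjoint X y‖ ^ 2 := by
      rw [ContinuousLinearMap.smul_apply, norm_smul, mul_pow, Complex.norm_real,
        Real.norm_eq_abs, sq_abs]
    have hnsm2 : ‖((κ : ℂ) • X) x‖ ^ 2 = κ ^ 2 * ‖X x‖ ^ 2 := by
      rw [ContinuousLinearMap.smul_apply, norm_smul, mul_pow, Complex.norm_real,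
        Real.norm_eq_abs, sq_abs]
    have hnneg : ‖(-H) x‖ ^ 2 = ‖H x‖ ^ 2 := by rw [ContinuousLinearMap.neg_apply, norm_neg]
    rw [hcross1, hcross2, hnsm1, hnsm2, hnneg, hv2]
    have hre1 : (-((κ : ℂ) * ⟪X (H x), y⟫_ℂ)).re = -(κ * (⟪X (H x), y⟫_ℂ).re) := by
      rw [Complex.neg_re, Complex.re_ofReal_mul]
    have hre2 : ((κ : ℂ) * ⟪H (X x), y⟫_ℂ).re = κ * (⟪H (X x), y⟫_ℂ).re :=
      Complex.re_ofReal_mul _ _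
    simp only [RCLike.re_to_complex]
    rw [hre1, hre2]
    have hXx' := hXx x
    have hXy' := hXy y
    have hsub : (⟪H (X x), y⟫_ℂ - ⟪X (H x), y⟫_ℂ).re
        = (⟪H (X x), y⟫_ℂ).re - (⟪X (H x), y⟫_ℂ).re := Complex.sub_re _ _
    rw [hsub] at hKbound
    set a := ‖x‖ with ha
    set b := ‖y‖ with hb
    set r1 := (⟪X (H x), y⟫_ℂ).re with hr1
    set r2 := (⟪H (X x), y⟫_ℂ).re with hr2
    have t1 : κ ^ 2 * (ρ ^ 2 * a ^ 2) ≤ κ ^ 2 * ‖X x‖ ^ 2 :=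
      mul_le_mul_of_nonneg_left hXx' (sq_nonneg κ)
    have t2 : κ ^ 2 * (ρ ^ 2 * b ^ 2) ≤ κ ^ 2 * ‖ContinuousLinearMap.adjoint X y‖ ^ 2 :=
      mul_le_mul_of_nonneg_left hXy' (sq_nonneg κ)
    have t3 : κ * -(k * a * b) ≤ κ * (r2 - r1) :=
      mul_le_mul_of_nonneg_left hKbound hκ.le
    have t4 : 0 ≤ κ * k * (a - b) ^ 2 :=
      mul_nonneg (mul_nonneg hκ.le hknn) (sq_nonneg _)
    have hck' : κ * k ≤ κ ^ 2 * ρ ^ 2 / 4 := by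
      rw [hcdef] at hck; linarith only [hck]
    have t5 : κ * k * (a ^ 2 + b ^ 2) ≤ κ ^ 2 * ρ ^ 2 / 4 * (a ^ 2 + b ^ 2) :=
      mul_le_mul_of_nonneg_right hck' (by positivity)
    have t6 : 0 ≤ κ ^ 2 * ρ ^ 2 * a ^ 2 := by positivity
    have t7 : 0 ≤ κ ^ 2 * ρ ^ 2 * b ^ 2 := by positivity
    rw [hcdef]
    linarith only [t1, t2, t3, t4, t5, t6, t7, sq_nonneg (‖H x‖), sq_nonneg (‖H y‖)]
  have hLsa : IsSelfAdjoint L := blockOp_isSelfAdjoint H X hH κ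
  have hLs : ∀ a b : WithLp 2 (E × E), ⟪L a, b⟫_ℂ = ⟪a, L b⟫_ℂ :=
    fun a b => (ContinuousLinearMap.isSelfAdjoint_iff_isSymmetric.mp hLsa) a b
  have hL2 : ∀ v : WithLp 2 (E × E), ⟪(L ^ 2) v, v⟫_ℂ = ⟪L v, L v⟫_ℂ := by
    intro v
    rw [pow_two, ContinuousLinearMap.mul_apply, hLs (L v) v]
  constructor
  · rw [ContinuousLinearMap.le_def]
    constructor
    · have h1sa : IsSelfAdjoint (((c : ℝ) : ℂ) • (1 : WithLp 2 (E × E) →L[ℂ] WithLp 2 (E × E))) := by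
        rw [IsSelfAdjoint, star_smul, star_one, Complex.star_def, Complex.conj_ofReal]
      exact ContinuousLinearMap.isSelfAdjoint_iff_isSymmetric.mp
        (IsSelfAdjoint.sub (R := WithLp 2 (E × E) →L[ℂ] WithLp 2 (E × E)) (hLsa.pow 2) h1sa)
    · intro v
      rw [ContinuousLinearMap.reApplyInnerSelf_apply, ContinuousLinearMap.sub_apply,
        inner_sub_left, map_sub, hL2 v]
      have e1 : ((((c : ℝ) : ℂ) • (1 : WithLp 2 (E × E) →L[ℂ] WithLp 2 (E × E))) v)
          = ((c : ℝ) : ℂ) • v := by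
        rw [ContinuousLinearMap.smul_apply, ContinuousLinearMap.one_apply]
      rw [e1, inner_smul_left, Complex.conj_ofReal]
      simp only [RCLike.re_to_complex]
      rw [Complex.re_ofReal_mul, cinner_self_re, cinner_self_re]
      have := hnorm v
      linarith
  · have hunit2 : IsUnit (L ^ 2) := by
      apply ContinuousLinearMap.isUnit_of_forall_le_norm_inner_map (L ^ 2) (c := ⟨c, hc.le⟩)
      · exact_mod_cast hc
      · intro v
        have hnrm : ‖⟪L v, L v⟫_ℂ‖ = ‖L v‖ ^ 2 := by
          rw [inner_self_eq_norm_sq_to_K, norm_pow, RCLike.norm_ofReal, abs_norm]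
        rw [hL2 v, hnrm]
        have := hnorm v
        change ‖v‖ ^ 2 * c ≤ _
        linarith
    exact (isUnit_pow_iff two_ne_zero).mp hunit2
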